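/- Let n ≥ 5. For every λ ∈ Φ3^n with λ ∉ ⟨C,J⟩(2,1) ∪ ⟨J⟩ρ, one has D^(n)(λ) > D^(n)((2,1)) > 1. -/
import Mathlib


open scoped Classical
noncomputable section

/-- The set `Φ₃ⁿ` of SU(3) weights at height `n`. -/
def Phi3 (n : ℕ) : Finset (ℤ × ℤ) :=
  (Finset.Icc ((1 : ℤ), (1 : ℤ)) ((n : ℤ), (n : ℤ))).filter (fun l => l.1 + l.2 ≤ (n : ℤ) - 1)

/-- The order-3 simple current `Jλ = (n−λ₁−λ₂, λ₁)`. -/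
def Jv (n : ℕ) (l : ℤ × ℤ) : ℤ × ℤ := ((n : ℤ) - l.1 - l.2, l.1)

/-- Conjugation `Cλ = (λ₂, λ₁)`. -/
def Cv (l : ℤ × ℤ) : ℤ × ℤ := (l.2, l.1)

/-- The orbit `⟨J⟩λ = {λ, Jλ, J²λ}`. -/
def orbJ (n : ℕ) (l : ℤ × ℤ) : Finset (ℤ × ℤ) := {l, Jv n l, Jv n (Jv n l)}

/-- The orbit `⟨C,J⟩λ = {λ, Jλ, J²λ, Cλ, JCλ, J²Cλ}`. -/
def orbCJ (n : ℕ) (l : ℤ × ℤ) : Finset (ℤ × ℤ) := orbJ n l ∪ orbJ n (Cv l)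

/-- The SU(3) quantum dimension `D⁽ⁿ⁾(λ)`. -/
def qdim (n : ℕ) (l : ℤ × ℤ) : ℝ :=
  (Real.sin (Real.pi * (l.1 : ℝ) / n) * Real.sin (Real.pi * (l.2 : ℝ) / n) *
      Real.sin (Real.pi * ((l.1 : ℝ) + (l.2 : ℝ)) / n)) /
    (Real.sin (Real.pi / n) ^ 2 * Real.sin (2 * Real.pi / n))

private lemma sin_le_sin' {x y : ℝ} (hx : 0 ≤ x) (hxy : x ≤ y) (hs : x + y ≤ Real.pi) :
    Real.sin x ≤ Real.sin y := by
  have hpi := Real.pi_pos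
  have hmono := Real.strictMonoOn_sin.monotoneOn
  rcases le_or_gt y (Real.pi / 2) with h | h
  · exact hmono ⟨by linarith, by linarith⟩ ⟨by linarith, h⟩ hxy
  · rw [← Real.sin_pi_sub y]
    exact hmono ⟨by linarith, by linarith⟩ ⟨by linarith, by linarith⟩ (by linarith)

private lemma sin_lt_sin' {x y : ℝ} (hx : 0 ≤ x) (hxy : x < y) (hs : x + y < Real.pi) :
    Real.sin x < Real.sin y := by
  have hpi := Real.pi_pos
  rcases le_or_gt y (Real.pi / 2) with h | h
  · exact Real.strictMonoOn_sin ⟨by linarith, by linarith⟩ ⟨by linarith, h⟩ hxy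
  · rw [← Real.sin_pi_sub y]
    exact Real.strictMonoOn_sin ⟨by linarith, by linarith⟩ ⟨by linarith, by linarith⟩ (by linarith)

private lemma two_sin_mul_sin (p q : ℝ) :
    2 * (Real.sin p * Real.sin q) = Real.cos (p - q) - Real.cos (p + q) := by
  rw [Real.cos_sub, Real.cos_add]; ring

private lemma spos (u : ℝ) (hu : 0 < u) (n k : ℤ) (hP : (n : ℝ) * u = Real.pi)
    (h1 : 1 ≤ k) (h2 : k ≤ n - 1) : 0 < Real.sin ((k : ℝ) * u) := by
  have hk1 : (1:ℝ) ≤ (k:ℝ) := by exact_mod_cast h1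
  have hk2 : (k:ℝ) ≤ (n:ℝ) - 1 := by exact_mod_cast h2
  apply Real.sin_pos_of_pos_of_lt_pi
  · nlinarith
  · nlinarith

private lemma ge2 (u : ℝ) (hu : 0 < u) (n k : ℤ) (hP : (n : ℝ) * u = Real.pi)
    (hn : 5 ≤ n) (h1 : 2 ≤ k) (h2 : k ≤ n - 2) :
    Real.sin (2 * u) ≤ Real.sin ((k : ℝ) * u) := by
  have hk1 : (2:ℝ) ≤ (k:ℝ) := by exact_mod_cast h1
  have hk2 : (k:ℝ) ≤ (n:ℝ) - 2 := by exact_mod_cast h2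
  have hn' : (5:ℝ) ≤ (n:ℝ) := by exact_mod_cast hn
  rcases le_or_gt (2 * k) n with h | h
  · have : (2:ℝ) * (k:ℝ) ≤ (n:ℝ) := by exact_mod_cast h
    exact sin_le_sin' (by nlinarith) (by nlinarith) (by nlinarith)
  · have h' : (n:ℝ) < 2 * (k:ℝ) := by exact_mod_cast h
    rw [show (k:ℝ) * u = Real.pi - ((n:ℝ) - (k:ℝ)) * u by rw [← hP]; ring,
      Real.sin_pi_sub]
    exact sin_le_sin' (by nlinarith) (by nlinarith) (by nlinarith)

/-- key sorted lemma -/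
private lemma key (u : ℝ) (hu : 0 < u) (n x y z : ℤ) (hn : 5 ≤ n)
    (hP : (n : ℝ) * u = Real.pi)
    (hx : 1 ≤ x) (hxy : x ≤ y) (hyz : y ≤ z) (hsum : x + y + z = n)
    (h1 : ¬(x = 1 ∧ y = 1)) (h2 : ¬(x = 1 ∧ y = 2)) :
    Real.sin u * Real.sin (2 * u) * Real.sin (3 * u)
      < Real.sin ((x : ℝ) * u) * Real.sin ((y : ℝ) * u) * Real.sin ((z : ℝ) * u) := by
  have hpi := Real.pi_pos
  have hn' : (5:ℝ) ≤ (n:ℝ) := by exact_mod_cast hn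
  have hsum' : (x:ℝ) + (y:ℝ) + (z:ℝ) = (n:ℝ) := by exact_mod_cast hsum
  have spy : 0 < Real.sin ((y : ℝ) * u) := spos u hu n y hP (by omega) (by omega)
  have spz : 0 < Real.sin ((z : ℝ) * u) := spos u hu n z hP (by omega) (by omega)
  have sp1 : 0 < Real.sin u := by
    have := spos u hu n 1 hP (by omega) (by omega); simpa using this
  have sp2 : 0 < Real.sin (2 * u) := by
    have := spos u hu n 2 hP (by omega) (by omega); push_cast at this; linarith
  by_cases hx1 : x = 1
  · -- case A : x = 1, y ≥ 3
    have hy3 : 3 ≤ y := by omega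
    have hy3' : (3:ℝ) ≤ (y:ℝ) := by exact_mod_cast hy3
    have hyz'' : (y:ℝ) ≤ (z:ℝ) := by exact_mod_cast hyz
    subst hx1
    have hyzn : (y:ℝ) + (z:ℝ) = (n:ℝ) - 1 := by push_cast at hsum' ⊢; linarith
    have hc : Real.cos (((n:ℝ) - 5) * u) < Real.cos (((z:ℝ) - (y:ℝ)) * u) := by
      have hd : (z:ℝ) - (y:ℝ) ≤ (n:ℝ) - 7 := by linarith
      apply Real.strictAntiOn_cos
      · constructor
        · nlinarith
        · nlinarith
      · constructor
        · nlinarith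
        · nlinarith
      · nlinarith
    have e1 := two_sin_mul_sin ((y:ℝ) * u) ((z:ℝ) * u)
    have e2 := two_sin_mul_sin (2 * u) (((n:ℝ) - 3) * u)
    rw [show (y:ℝ) * u - (z:ℝ) * u = -(((z:ℝ) - (y:ℝ)) * u) by ring, Real.cos_neg,
      show (y:ℝ) * u + (z:ℝ) * u = ((n:ℝ) - 1) * u by rw [← hyzn]; ring] at e1
    rw [show 2 * u - ((n:ℝ) - 3) * u = -(((n:ℝ) - 5) * u) by ring, Real.cos_neg,
      show 2 * u + ((n:ℝ) - 3) * u = ((n:ℝ) - 1) * u by ring] at e2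
    have e3 : Real.sin (((n:ℝ) - 3) * u) = Real.sin (3 * u) := by
      rw [show ((n:ℝ) - 3) * u = Real.pi - 3 * u by rw [← hP]; ring, Real.sin_pi_sub]
    rw [e3] at e2
    have h23 : Real.sin (2 * u) * Real.sin (3 * u)
        < Real.sin ((y:ℝ) * u) * Real.sin ((z:ℝ) * u) := by linarith
    have := mul_lt_mul_of_pos_left h23 sp1
    simp only [Int.cast_one, one_mul]
    linarith
  · -- case B : x ≥ 2
    have hx2 : 2 ≤ x := by omega
    have spx : 0 < Real.sin ((x : ℝ) * u) := spos u hu n x hP (by omega) (by omega)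
    have gx := ge2 u hu n x hP hn hx2 (by omega)
    have gy := ge2 u hu n y hP hn (by omega) (by omega)
    have gz := ge2 u hu n z hP hn (by omega) (by omega)
    have h1cos : Real.cos (2 * u) < 1 := by
      have : Real.cos (2 * u) < Real.cos 0 := by
        apply Real.strictAntiOn_cos
        · constructor <;> nlinarith
        · constructor <;> nlinarith
        · nlinarith
      simpa using this
    have key2 : Real.sin u * Real.sin (3 * u) < Real.sin (2 * u) * Real.sin (2 * u) := by
      have e1 := two_sin_mul_sin u (3 * u)
      have e2 := two_sin_mul_sin (2 * u) (2 * u)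
      rw [show u - 3 * u = -(2 * u) by ring, Real.cos_neg,
        show u + 3 * u = 4 * u by ring] at e1
      rw [show (2:ℝ) * u - 2 * u = 0 by ring, Real.cos_zero,
        show (2:ℝ) * u + 2 * u = 4 * u by ring] at e2
      linarith
    have A : Real.sin (2*u) * Real.sin (2*u) ≤ Real.sin ((x:ℝ)*u) * Real.sin ((y:ℝ)*u) :=
      mul_le_mul gx gy sp2.le spx.le
    have B : Real.sin (2*u) * Real.sin (2*u) * Real.sin (2*u)
        ≤ Real.sin ((x:ℝ)*u) * Real.sin ((y:ℝ)*u) * Real.sin ((z:ℝ)*u) :=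
      mul_le_mul A gz sp2.le (mul_pos spx spy).le
    have C := mul_lt_mul_of_pos_right key2 sp2
    nlinarith [B, C]

/-- unsorted version -/
private lemma keyU (u : ℝ) (hu : 0 < u) (n a b c : ℤ) (hn : 5 ≤ n)
    (hP : (n : ℝ) * u = Real.pi)
    (ha : 1 ≤ a) (hb : 1 ≤ b) (hc : 1 ≤ c) (hsum : a + b + c = n)
    (e1 : ¬(a = 1 ∧ b = 1)) (e2 : ¬(a = 1 ∧ c = 1)) (e3 : ¬(b = 1 ∧ c = 1))
    (f1 : ¬(a = 1 ∧ b = 2)) (f2 : ¬(a = 2 ∧ b = 1)) (f3 : ¬(a = 1 ∧ c = 2))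
    (f4 : ¬(a = 2 ∧ c = 1)) (f5 : ¬(b = 1 ∧ c = 2)) (f6 : ¬(b = 2 ∧ c = 1)) :
    Real.sin u * Real.sin (2 * u) * Real.sin (3 * u)
      < Real.sin ((a : ℝ) * u) * Real.sin ((b : ℝ) * u) * Real.sin ((c : ℝ) * u) := by
  rcases le_total a b with hab | hab <;> rcases le_total b c with hbc | hbc <;>
    rcases le_total a c with hac | hac
  · have := key u hu n a b c hn hP ha hab hbc hsum (by omega) (by omega); linarith
  · have := key u hu n a b c hn hP ha hab hbc hsum (by omega) (by omega); linarith
  · have := key u hu n a c b hn hP ha hac hbc (by omega) (by omega) (by omega); linarith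
  · have := key u hu n c a b hn hP hc hac hab (by omega) (by omega) (by omega); linarith
  · have := key u hu n b a c hn hP hb hab hac (by omega) (by omega) (by omega); linarith
  · have := key u hu n b c a hn hP hb hbc hac (by omega) (by omega) (by omega); linarith
  · have := key u hu n c b a hn hP hc hbc hab (by omega) (by omega) (by omega); linarith
  · have := key u hu n c b a hn hP hc hbc hab (by omega) (by omega) (by omega); linarith

theorem statement8 (n : ℕ) (hn : 5 ≤ n) :
    ∀ lam ∈ Phi3 n, lam ∉ orbCJ n (2, 1) ∪ orbJ n (1, 1) →
      qdim n lam > qdim n (2, 1) ∧ qdim n (2, 1) > 1 := by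
  rintro ⟨a, b⟩ hmem hnot
  simp [Phi3, Prod.le_def, Finset.mem_Icc] at hmem
  simp [orbCJ, orbJ, Jv, Cv, Prod.ext_iff] at hnot
  obtain ⟨g1, g2, g3, g4, g5, g6, g7, g8, g9⟩ := hnot
  have hpi := Real.pi_pos
  have hn' : (5:ℝ) ≤ (n:ℝ) := by exact_mod_cast hn
  have hNpos : (0:ℝ) < (n:ℝ) := by linarith
  set u : ℝ := Real.pi / n with hu_def
  have hu : 0 < u := by rw [hu_def]; positivity
  have hP : ((n:ℤ) : ℝ) * u = Real.pi := by
    rw [hu_def]; push_cast; field_simp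
  obtain ⟨⟨⟨ha, hb⟩, -, -⟩, hab⟩ := hmem
  set c : ℤ := (n:ℤ) - a - b with hc_def
  have hc : 1 ≤ c := by omega
  have hsum : a + b + c = (n:ℤ) := by omega
  have sp1 : 0 < Real.sin u := by
    have := spos u hu n 1 hP (by omega) (by omega); simpa using this
  have sp2 : 0 < Real.sin (2 * u) := by
    have := spos u hu n 2 hP (by omega) (by omega); push_cast at this; linarith
  have sp3 : 0 < Real.sin (3 * u) := by
    have := spos u hu n 3 hP (by omega) (by omega); push_cast at this; linarith
  have hD : 0 < Real.sin u ^ 2 * Real.sin (2 * u) := by positivity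
  have hq21 : qdim n (2, 1) =
      (Real.sin (2 * u) * Real.sin (1 * u) * Real.sin (3 * u)) /
        (Real.sin u ^ 2 * Real.sin (2 * u)) := by
    unfold qdim; rw [hu_def]; norm_num; ring_nf
  have hqab : qdim n (a, b) =
      (Real.sin ((a:ℝ) * u) * Real.sin ((b:ℝ) * u) * Real.sin ((c:ℝ) * u)) /
        (Real.sin u ^ 2 * Real.sin (2 * u)) := by
    have hcast : (a:ℝ) + (b:ℝ) + (c:ℝ) = ((n:ℤ):ℝ) := by exact_mod_cast hsum
    have habc : ((a:ℝ) + (b:ℝ)) * u = Real.pi - (c:ℝ) * u := by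
      have h2 : (a:ℝ) + (b:ℝ) = ((n:ℤ):ℝ) - (c:ℝ) := by linarith
      rw [h2, ← hP]; ring
    calc qdim n (a, b)
        = (Real.sin ((a:ℝ) * u) * Real.sin ((b:ℝ) * u) *
            Real.sin (((a:ℝ) + (b:ℝ)) * u)) /
            (Real.sin u ^ 2 * Real.sin (2 * u)) := by
          unfold qdim; rw [hu_def]; ring_nf
      _ = _ := by rw [habc, Real.sin_pi_sub]
  have hkey : Real.sin u * Real.sin (2 * u) * Real.sin (3 * u)
      < Real.sin ((a:ℝ) * u) * Real.sin ((b:ℝ) * u) * Real.sin ((c:ℝ) * u) :=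
    keyU u hu n a b c (by exact_mod_cast hn) hP ha hb hc hsum
      (by omega) (by omega) (by omega) (by omega) (by omega) (by omega)
      (by omega) (by omega) (by omega)
  constructor
  · rw [hqab, hq21, gt_iff_lt, div_lt_div_iff_of_pos_right hD]
    have h1u : Real.sin (1 * u) = Real.sin u := by norm_num
    rw [h1u]; linarith
  · rw [hq21, gt_iff_lt, lt_div_iff₀ hD]
    have h13 : Real.sin u < Real.sin (3 * u) := by
      apply sin_lt_sin' hu.le (by linarith)
      have : (4:ℝ) * u < ((n:ℤ):ℝ) * u := by
        have : (5:ℝ) ≤ ((n:ℤ):ℝ) := by push_cast; linarith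
        nlinarith
      linarith [hP]
    have h1u : Real.sin (1 * u) = Real.sin u := by norm_num
    rw [h1u]
    nlinarith [mul_lt_mul_of_pos_right h13 (mul_pos sp1 sp2)]
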